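/- Let r ≥ 0 be an integer and F̂ = (f̂_{jm})_{j∈{0,1}, 0≤m≤r} a 2×(r+1) real matrix. Then the polynomial P_r(F̂), of degree at most 2r+1, satisfies the two-point Hermite interpolation conditions: for every 0 ≤ ℓ ≤ r, (P_r(F̂))^{(ℓ)}(0) = f̂_{0ℓ} and (P_r(F̂))^{(ℓ)}(−1) = f̂_{1ℓ}. -/

import Mathlib

open Real Set

noncomputable section

/-- The Hermite basis polynomial
`P_m^0(x) = (1/m!) x^m (1+x)^{r+1} ∑_{n=0}^{r-m} (-x)^n C(r+n, n)`. -/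
def P0 (r m : ℕ) (x : ℝ) : ℝ :=
  (1 / (Nat.factorial m) : ℝ) * x ^ m * (1 + x) ^ (r + 1) *
    ∑ n ∈ Finset.range (r - m + 1), (-x) ^ n * (Nat.choose (r + n) n : ℝ)

/-- The Hermite basis polynomial
`P_m^1(x) = (1/m!) (1+x)^m (-x)^{r+1} ∑_{n=0}^{r-m} (1+x)^n C(r+n, n)`. -/
def P1 (r m : ℕ) (x : ℝ) : ℝ :=
  (1 / (Nat.factorial m) : ℝ) * (1 + x) ^ m * (-x) ^ (r + 1) *
    ∑ n ∈ Finset.range (r - m + 1), (1 + x) ^ n * (Nat.choose (r + n) n : ℝ)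

/-- The two-point Hermite interpolation polynomial `P_r(F̂)` of a boundary
data matrix `F̂`. -/
def Pmat (r : ℕ) (A : Fin 2 → Fin (r + 1) → ℝ) (x : ℝ) : ℝ :=
  ∑ m : Fin (r + 1), A 0 m * P0 r (m : ℕ) x + ∑ m : Fin (r + 1), A 1 m * P1 r (m : ℕ) x

/-- The max-norm of a `2 × (r+1)` matrix. -/
def maxNorm {r : ℕ} (A : Fin 2 → Fin (r + 1) → ℝ) : ℝ :=
  Finset.univ.sup' Finset.univ_nonempty (fun p : Fin 2 × Fin (r + 1) => |A p.1 p.2|)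

namespace HermiteAux

open Polynomial

/-- truncated inverse series of `(1+X)^{r+1}`, as a polynomial -/
def Sp (r k : ℕ) : ℝ[X] :=
  ∑ n ∈ Finset.range (k + 1), C ((-1 : ℝ) ^ n * ((r + n).choose n : ℝ)) * X ^ n

/-- the "mirror" version of `Sp` -/
def Sq (r k : ℕ) : ℝ[X] :=
  ∑ n ∈ Finset.range (k + 1), C (((r + n).choose n : ℝ)) * (1 + X) ^ n

lemma coeff_Sp (r k j : ℕ) :
    (Sp r k).coeff j = if j ≤ k then (-1 : ℝ) ^ j * ((r + j).choose j : ℝ) else 0 := by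
  simp only [Sp, finset_sum_coeff, coeff_C_mul, coeff_X_pow, mul_ite, mul_one, mul_zero,
    Finset.sum_ite_eq (Finset.range (k + 1)), Finset.mem_range, Nat.lt_succ_iff]

lemma key_ps (r : ℕ) :
    (PowerSeries.mk fun n => ((-1 : ℝ)) ^ n * ((r + n).choose r : ℝ)) *
      (1 + PowerSeries.X) ^ (r + 1) = 1 := by
  have h := PowerSeries.mk_add_choose_mul_one_sub_pow_eq_one (S := ℝ) (d := r)
  have h2 := congrArg (PowerSeries.rescale (-1 : ℝ)) h
  rw [map_mul, map_pow, map_sub, map_one, PowerSeries.rescale_neg_one_X,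
    PowerSeries.rescale_mk, sub_neg_eq_add] at h2
  exact h2

lemma key_dvd0 (r k : ℕ) :
    (X : ℝ[X]) ^ (k + 1) ∣ ((1 + X) ^ (r + 1) * Sp r k - 1) := by
  set w : PowerSeries ℝ := PowerSeries.mk fun n => ((-1 : ℝ)) ^ n * ((r + n).choose r : ℝ)
    with hw
  rw [Polynomial.X_pow_dvd_iff]
  intro d hd
  rw [← Polynomial.coeff_coe]
  have hcoe : ((((1 + X) ^ (r + 1) * Sp r k - 1 : ℝ[X])) : PowerSeries ℝ)
      = (1 + PowerSeries.X) ^ (r + 1) * ((Sp r k : ℝ[X]) : PowerSeries ℝ) - 1 := by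
    push_cast
    simp
  rw [hcoe]
  have hdvd : (PowerSeries.X : PowerSeries ℝ) ^ (k + 1) ∣
      (((Sp r k : ℝ[X]) : PowerSeries ℝ) - w) := by
    rw [PowerSeries.X_pow_dvd_iff]
    intro m hm
    have hmk : m ≤ k := Nat.lt_succ_iff.mp hm
    rw [map_sub, Polynomial.coeff_coe, coeff_Sp, if_pos hmk, hw, PowerSeries.coeff_mk]
    have : (r + m).choose m = (r + m).choose r := by
      rw [← Nat.choose_symm (Nat.le_add_right r m)]
      congr 1
      omega
    rw [this, sub_self]
  have heq : (1 + PowerSeries.X) ^ (r + 1) * ((Sp r k : ℝ[X]) : PowerSeries ℝ) - 1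
      = (1 + PowerSeries.X) ^ (r + 1) * (((Sp r k : ℝ[X]) : PowerSeries ℝ) - w) := by
    rw [mul_sub]
    rw [mul_comm ((1 + PowerSeries.X) ^ (r + 1)) w] at *
    rw [key_ps r]
  rw [heq]
  exact PowerSeries.X_pow_dvd_iff.mp (Dvd.dvd.mul_left hdvd _) d hd

lemma comp_Sp (r k : ℕ) : (Sp r k).comp (-1 - X) = Sq r k := by
  have hrh : ∀ p : ℝ[X], p.comp (-1 - X) = compRingHom (-1 - X) p := fun p => rfl
  rw [Sp, Sq, hrh, map_sum]
  refine Finset.sum_congr rfl fun n _ => ?_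
  rw [← hrh]
  rw [mul_comp, C_comp, X_pow_comp]
  rw [show (C ((-1 : ℝ) ^ n * ((r + n).choose n : ℝ)))
      = (-1 : ℝ[X]) ^ n * C (((r + n).choose n : ℝ)) by
    rw [map_mul, map_pow, map_neg, map_one]]
  rw [mul_assoc, mul_comm ((-1 : ℝ[X]) ^ n), mul_assoc, ← mul_pow]
  congr 2
  ring

lemma key_dvd1 (r k : ℕ) : ((1 : ℝ[X]) + X) ^ (k + 1) ∣ ((-X) ^ (r + 1) * Sq r k - 1) := by
  obtain ⟨h, hh⟩ := key_dvd0 r k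
  have hc := congrArg (fun p : ℝ[X] => p.comp (-1 - X)) hh
  simp only [sub_comp, mul_comp, pow_comp, add_comp, one_comp, X_comp, comp_Sp] at hc
  have h1 : (1 : ℝ[X]) + (-1 - X) = -X := by ring
  rw [h1] at hc
  refine ⟨(-1 : ℝ[X]) ^ (k + 1) * h.comp (-1 - X), ?_⟩
  rw [hc, ← mul_assoc, ← mul_pow]
  congr 2
  ring

/-- eval at `c` of iterated derivatives of `(X-c)^k * q` vanish below order `k` -/
lemma L1 (c : ℝ) (ℓ : ℕ) : ∀ k : ℕ, ∀ q : ℝ[X], ℓ < k →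
    (derivative^[ℓ] ((X - C c) ^ k * q)).eval c = 0 := by
  induction ℓ with
  | zero =>
    intro k q hk
    obtain ⟨j, rfl⟩ := Nat.exists_eq_add_of_lt hk
    simp [pow_succ, mul_assoc]
  | succ n ih =>
    intro k q hk
    obtain ⟨j, rfl⟩ := Nat.exists_eq_add_of_lt hk
    rw [Function.iterate_succ_apply]
    have hd : derivative ((X - C c) ^ (n + 1 + j + 1) * q)
        = (X - C c) ^ (n + 1 + j) *
            (C ((n + 1 + j + 1 : ℕ) : ℝ) * q + (X - C c) * derivative q) := by
      rw [derivative_mul, derivative_X_sub_C_pow]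
      have h2 : n + 1 + j + 1 - 1 = n + 1 + j := by omega
      rw [h2]
      ring
    rw [hd]
    exact ih (n + 1 + j) _ (by omega)

/-- eval at `c` of iterated derivatives of `(X-c)^m` -/
lemma L2 (c : ℝ) (m ℓ : ℕ) :
    (derivative^[ℓ] ((X - C c) ^ m : ℝ[X])).eval c
      = if ℓ = m then (m.factorial : ℝ) else 0 := by
  rcases lt_trichotomy ℓ m with h | h | h
  · rw [if_neg (by omega)]
    simpa using L1 c ℓ m 1 h
  · subst h
    rw [if_pos rfl, iterate_derivative_X_sub_pow_self]
    simp
  · rw [if_neg (by omega), iterate_derivative_X_sub_pow]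
    rw [Nat.descFactorial_eq_zero_iff_lt.mpr h]
    simp

lemma itd_add (k : ℕ) (p q : ℝ[X]) :
    derivative^[k] (p + q) = derivative^[k] p + derivative^[k] q := by
  induction k generalizing p q with
  | zero => rfl
  | succ n ih => rw [Function.iterate_succ_apply, Function.iterate_succ_apply,
      Function.iterate_succ_apply, derivative_add, ih]

lemma iteratedDeriv_polyEval (p : ℝ[X]) (n : ℕ) :
    iteratedDeriv n (fun x => p.eval x) = fun x => (derivative^[n] p).eval x := by
  induction n with
  | zero => simp
  | succ n ih =>
    rw [iteratedDeriv_succ, ih, Function.iterate_succ_apply']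
    funext x
    exact Polynomial.deriv _

/-- polynomial version of `P0` -/
def p0p (r m : ℕ) : ℝ[X] :=
  C ((m.factorial : ℝ)⁻¹) * X ^ m * (1 + X) ^ (r + 1) * Sp r (r - m)

/-- polynomial version of `P1` -/
def p1p (r m : ℕ) : ℝ[X] :=
  C ((m.factorial : ℝ)⁻¹) * (1 + X) ^ m * (-X) ^ (r + 1) * Sq r (r - m)

lemma P0_eq (r m : ℕ) (x : ℝ) : P0 r m x = (p0p r m).eval x := by
  rw [P0, p0p]
  simp only [eval_mul, eval_C, eval_pow, eval_add, eval_one, eval_X, eval_finset_sum, one_div,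
    Sp]
  congr 1
  exact Finset.sum_congr rfl fun n _ => by ring

lemma P1_eq (r m : ℕ) (x : ℝ) : P1 r m x = (p1p r m).eval x := by
  rw [P1, p1p]
  simp only [eval_mul, eval_C, eval_pow, eval_add, eval_one, eval_X, eval_neg, eval_finset_sum,
    one_div, Sq]
  congr 1
  exact Finset.sum_congr rfl fun n _ => by ring

lemma p0p_decomp (r m : ℕ) (hm : m ≤ r) : ∃ q : ℝ[X],
    p0p r m = C ((m.factorial : ℝ)⁻¹) * X ^ m + X ^ (r + 1) * q := by
  obtain ⟨h, hh⟩ := key_dvd0 r (r - m)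
  refine ⟨C ((m.factorial : ℝ)⁻¹) * h, ?_⟩
  have h1 : ((1 : ℝ[X]) + X) ^ (r + 1) * Sp r (r - m) = 1 + X ^ (r - m + 1) * h := by
    have := sub_eq_iff_eq_add.mp hh
    rw [this]
    ring
  have h2 : p0p r m = C ((m.factorial : ℝ)⁻¹) * X ^ m
      * ((1 + X) ^ (r + 1) * Sp r (r - m)) := by
    rw [p0p]; ring
  rw [h2, h1, mul_add, mul_one]
  congr 1
  have h3 : m + (r - m + 1) = r + 1 := by omega
  rw [← h3, pow_add]
  ring

lemma p1p_decomp (r m : ℕ) (hm : m ≤ r) : ∃ q : ℝ[X],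
    p1p r m = C ((m.factorial : ℝ)⁻¹) * (1 + X) ^ m + (1 + X) ^ (r + 1) * q := by
  obtain ⟨h, hh⟩ := key_dvd1 r (r - m)
  refine ⟨C ((m.factorial : ℝ)⁻¹) * h, ?_⟩
  have h1 : ((-X : ℝ[X])) ^ (r + 1) * Sq r (r - m) = 1 + (1 + X) ^ (r - m + 1) * h := by
    have := sub_eq_iff_eq_add.mp hh
    rw [this]
    ring
  have h2 : p1p r m = C ((m.factorial : ℝ)⁻¹) * (1 + X) ^ m
      * ((-X) ^ (r + 1) * Sq r (r - m)) := by
    rw [p1p]; ring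
  rw [h2, h1, mul_add, mul_one]
  congr 1
  have h3 : m + (r - m + 1) = r + 1 := by omega
  rw [← h3, pow_add]
  ring

lemma hX0 : (X : ℝ[X]) = X - C 0 := by simp

lemma hX1 : ((1 : ℝ[X]) + X) = X - C (-1) := by
  rw [map_neg, map_one, sub_neg_eq_add]
  ring

lemma eval0_p0 (r m ℓ : ℕ) (hm : m ≤ r) (hl : ℓ ≤ r) :
    (derivative^[ℓ] (p0p r m)).eval 0 = if ℓ = m then 1 else 0 := by
  obtain ⟨q, hq⟩ := p0p_decomp r m hm
  rw [hq, itd_add, eval_add, iterate_derivative_C_mul, eval_mul, eval_C]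
  have hterm2 : (derivative^[ℓ] ((X : ℝ[X]) ^ (r + 1) * q)).eval 0 = 0 := by
    rw [hX0]
    exact L1 0 ℓ (r + 1) q (by omega)
  rw [hterm2, add_zero, hX0, L2 0 m ℓ]
  by_cases h : ℓ = m
  · rw [if_pos h, if_pos h, inv_mul_cancel₀]
    exact_mod_cast Nat.factorial_ne_zero m
  · rw [if_neg h, if_neg h, mul_zero]

lemma evalm1_p0 (r m ℓ : ℕ) (hl : ℓ ≤ r) :
    (derivative^[ℓ] (p0p r m)).eval (-1) = 0 := by
  have h1 : p0p r m = (X - C (-1)) ^ (r + 1)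
      * (C ((m.factorial : ℝ)⁻¹) * X ^ m * Sp r (r - m)) := by
    rw [p0p, ← hX1]; ring
  rw [h1]
  exact L1 (-1) ℓ (r + 1) _ (by omega)

lemma eval0_p1 (r m ℓ : ℕ) (hl : ℓ ≤ r) :
    (derivative^[ℓ] (p1p r m)).eval 0 = 0 := by
  have h1 : p1p r m = (X - C 0) ^ (r + 1)
      * ((-1 : ℝ[X]) ^ (r + 1) * (C ((m.factorial : ℝ)⁻¹) * (1 + X) ^ m * Sq r (r - m))) := by
    rw [p1p, ← hX0, neg_pow]; ring
  rw [h1]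
  exact L1 0 ℓ (r + 1) _ (by omega)

lemma evalm1_p1 (r m ℓ : ℕ) (hm : m ≤ r) (hl : ℓ ≤ r) :
    (derivative^[ℓ] (p1p r m)).eval (-1) = if ℓ = m then 1 else 0 := by
  obtain ⟨q, hq⟩ := p1p_decomp r m hm
  rw [hq, itd_add, eval_add, iterate_derivative_C_mul, eval_mul, eval_C]
  have hterm2 : (derivative^[ℓ] (((1 : ℝ[X]) + X) ^ (r + 1) * q)).eval (-1) = 0 := by
    rw [hX1]
    exact L1 (-1) ℓ (r + 1) q (by omega)
  rw [hterm2, add_zero, hX1, L2 (-1) m ℓ]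
  by_cases h : ℓ = m
  · rw [if_pos h, if_pos h, inv_mul_cancel₀]
    exact_mod_cast Nat.factorial_ne_zero m
  · rw [if_neg h, if_neg h, mul_zero]

end HermiteAux

open HermiteAux Polynomial in
/-- The two-point Hermite interpolation conditions for `P_r(F̂)`:
for every `0 ≤ ℓ ≤ r`, `(P_r(F̂))^{(ℓ)}(0) = f̂_{0ℓ}` and `(P_r(F̂))^{(ℓ)}(-1) = f̂_{1ℓ}`. -/
theorem Pmat_hermite_interpolation (r : ℕ) (Fh : Fin 2 → Fin (r + 1) → ℝ)
    (ℓ : Fin (r + 1)) :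
    iteratedDeriv (ℓ : ℕ) (Pmat r Fh) 0 = Fh 0 ℓ ∧
    iteratedDeriv (ℓ : ℕ) (Pmat r Fh) (-1) = Fh 1 ℓ := by
  set P : ℝ[X] := (∑ m : Fin (r + 1), C (Fh 0 m) * p0p r (m : ℕ))
      + ∑ m : Fin (r + 1), C (Fh 1 m) * p1p r (m : ℕ) with hP
  have hPmat : Pmat r Fh = fun x => P.eval x := by
    funext x
    simp only [Pmat, hP, eval_add, eval_finset_sum, eval_mul, eval_C, P0_eq, P1_eq]
  have hderiv : ∀ x : ℝ, iteratedDeriv (ℓ : ℕ) (Pmat r Fh) x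
      = (derivative^[(ℓ : ℕ)] P).eval x := by
    intro x
    rw [hPmat, iteratedDeriv_polyEval]
  have hexp : derivative^[(ℓ : ℕ)] P
      = (∑ m : Fin (r + 1), C (Fh 0 m) * derivative^[(ℓ : ℕ)] (p0p r (m : ℕ)))
        + ∑ m : Fin (r + 1), C (Fh 1 m) * derivative^[(ℓ : ℕ)] (p1p r (m : ℕ)) := by
    rw [hP, itd_add, iterate_derivative_sum, iterate_derivative_sum]
    congr 1 <;> exact Finset.sum_congr rfl fun m _ => iterate_derivative_C_mul _ _ _
  have hl : (ℓ : ℕ) ≤ r := Fin.is_le ℓ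
  constructor
  · rw [hderiv 0, hexp, eval_add, eval_finset_sum, eval_finset_sum]
    have h1 : ∀ m : Fin (r + 1),
        (C (Fh 0 m) * derivative^[(ℓ : ℕ)] (p0p r (m : ℕ))).eval 0
          = if ℓ = m then Fh 0 m else 0 := by
      intro m
      rw [eval_mul, eval_C, eval0_p0 r m ℓ (Fin.is_le m) hl]
      by_cases h : ℓ = m
      · rw [if_pos (by rw [h]), if_pos (by rw [h]), mul_one]
      · rw [if_neg (fun hc => h (Fin.val_injective hc)), if_neg h, mul_zero]
    have h2 : ∀ m : Fin (r + 1),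
        (C (Fh 1 m) * derivative^[(ℓ : ℕ)] (p1p r (m : ℕ))).eval 0 = 0 := by
      intro m
      rw [eval_mul, eval_C, eval0_p1 r m ℓ hl, mul_zero]
    rw [Finset.sum_congr rfl fun m _ => h1 m, Finset.sum_congr rfl fun m _ => h2 m]
    simp
  · rw [hderiv (-1), hexp, eval_add, eval_finset_sum, eval_finset_sum]
    have h1 : ∀ m : Fin (r + 1),
        (C (Fh 0 m) * derivative^[(ℓ : ℕ)] (p0p r (m : ℕ))).eval (-1) = 0 := by
      intro m
      rw [eval_mul, eval_C, evalm1_p0 r m ℓ hl, mul_zero]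
    have h2 : ∀ m : Fin (r + 1),
        (C (Fh 1 m) * derivative^[(ℓ : ℕ)] (p1p r (m : ℕ))).eval (-1)
          = if ℓ = m then Fh 1 m else 0 := by
      intro m
      rw [eval_mul, eval_C, evalm1_p1 r m ℓ (Fin.is_le m) hl]
      by_cases h : ℓ = m
      · rw [if_pos (by rw [h]), if_pos (by rw [h]), mul_one]
      · rw [if_neg (fun hc => h (Fin.val_injective hc)), if_neg h, mul_zero]
    rw [Finset.sum_congr rfl fun m _ => h1 m, Finset.sum_congr rfl fun m _ => h2 m]
    simp
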